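/- For every μ > 0, the matrices P_μ := I_m + μ·S·D and A_μ := I_m + μ·Iinv·D are invertible and every complex eigenvalue of P_μ⁻¹A_μ is a real number lying in [1, ∞). -/

import Mathlib

open Matrix

/-- The sinc integrand `sin(πt)/(πt)`, extended by the value 1 at `t = 0`. -/
noncomputable def sincFn (t : ℝ) : ℝ :=
  if t = 0 then 1 else Real.sin (Real.pi * t) / (Real.pi * t)

/-- The `m × m` Toeplitz matrix `Iinv(k,l) = 1/2 + ∫₀^{k-l} sin(πt)/(πt) dt`. -/
noncomputable def IinvMat (m : ℕ) : Matrix (Fin m) (Fin m) ℝ :=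
  fun k l => 1 / 2 + ∫ t in (0 : ℝ)..((k : ℝ) - (l : ℝ)), sincFn t

/-- The skew-symmetric part `S = (Iinv - Iinvᵀ)/2`. -/
noncomputable def Smat (m : ℕ) : Matrix (Fin m) (Fin m) ℝ :=
  (2 : ℝ)⁻¹ • (IinvMat m - (IinvMat m)ᵀ)

/-- The all-ones vector `e ∈ ℝ^m`. -/
def eVec (m : ℕ) : Fin m → ℝ := fun _ => 1

lemma sincFn_even (t : ℝ) : sincFn (-t) = sincFn t := by
  unfold sincFn
  rcases eq_or_ne t 0 with h | h
  · simp [h]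
  · rw [if_neg (neg_ne_zero.2 h), if_neg h]
    rw [mul_neg, Real.sin_neg, neg_div_neg_eq]

lemma sinc_int_odd (c : ℝ) :
    (∫ t in (0:ℝ)..(-c), sincFn t) = -∫ t in (0:ℝ)..c, sincFn t := by
  have h1 : (∫ t in (0:ℝ)..(-c), sincFn t) = ∫ t in (0:ℝ)..(-c), sincFn (-t) := by
    simp [sincFn_even]
  rw [h1, intervalIntegral.integral_comp_neg, neg_zero,
    intervalIntegral.integral_symm, neg_neg]

lemma Iinv_add (m : ℕ) (k l : Fin m) : IinvMat m k l + IinvMat m l k = 1 := by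
  unfold IinvMat
  have : ((l : ℝ) - (k : ℝ)) = -((k : ℝ) - (l : ℝ)) := by ring
  rw [this, sinc_int_odd]
  ring

lemma Smat_eq (m : ℕ) (k l : Fin m) : Smat m k l = IinvMat m k l - 1 / 2 := by
  have h := Iinv_add m k l
  unfold Smat
  simp only [Matrix.smul_apply, Matrix.sub_apply, transpose_apply, smul_eq_mul]
  linarith

lemma Smat_skew (m : ℕ) (k l : Fin m) : Smat m k l = - Smat m l k := by
  unfold Smat
  simp only [Matrix.smul_apply, Matrix.sub_apply, transpose_apply, smul_eq_mul]
  ring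

lemma skew_form (m : ℕ) (y : Fin m → ℝ) :
    ∑ k, y k * ∑ l, Smat m k l * y l = 0 := by
  have h : (∑ k, ∑ l, y k * (Smat m k l * y l))
      + (∑ k, ∑ l, y k * (Smat m k l * y l)) = 0 := by
    nth_rewrite 1 [Finset.sum_comm]
    rw [← Finset.sum_add_distrib]
    rw [Finset.sum_eq_zero]
    intro k _
    rw [← Finset.sum_add_distrib]
    rw [Finset.sum_eq_zero]
    intro l _
    rw [Smat_skew m l k]
    ring
  have h2 : ∑ k, y k * ∑ l, Smat m k l * y l
      = ∑ k, ∑ l, y k * (Smat m k l * y l) := by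
    simp [Finset.mul_sum]
  linarith

theorem stmt7 (m : ℕ) (d : Fin m → ℝ) (hd : ∀ j, 0 < d j) (μ : ℝ) (hμ : 0 < μ) :
    let D : Matrix (Fin m) (Fin m) ℝ := Matrix.diagonal d
    let P : Matrix (Fin m) (Fin m) ℝ := 1 + μ • (Smat m * D)
    let A : Matrix (Fin m) (Fin m) ℝ := 1 + μ • (IinvMat m * D)
    IsUnit P ∧ IsUnit A ∧
      ∀ (lam : ℂ) (ξ : Fin m → ℂ), ξ ≠ 0 →
        ((P⁻¹ * A).map Complex.ofReal).mulVec ξ = lam • ξ →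
        lam.im = 0 ∧ 1 ≤ lam.re := by
  intro D P A
  -- entry formulas
  have hP : ∀ k l, P k l = (if k = l then (1:ℝ) else 0) + μ * (Smat m k l * d l) := by
    intro k l
    simp [P, D, Matrix.add_apply, Matrix.one_apply, Matrix.mul_diagonal]
  have hA : ∀ k l, A k l = P k l + μ * (1 / 2 * d l) := by
    intro k l
    have h := Smat_eq m k l
    simp only [P, A, D, Matrix.add_apply, Matrix.smul_apply, Matrix.mul_diagonal, smul_eq_mul]
    rw [h]; ring
  -- mulVec formulas over ℝ
  have hmv : ∀ (M : Matrix (Fin m) (Fin m) ℝ) (x : Fin m → ℝ) (k),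
      (M.mulVec x) k = ∑ l, M k l * x l := by
    intro M x k; simp [Matrix.mulVec, dotProduct]
  have hPmv : ∀ (x : Fin m → ℝ) (k), (P.mulVec x) k
      = x k + μ * ∑ l, Smat m k l * (d l * x l) := by
    intro x k
    rw [hmv]
    rw [Finset.sum_congr rfl (fun l _ => by rw [hP k l]; ring_nf :
      ∀ l ∈ Finset.univ, P k l * x l
        = (if k = l then (1:ℝ) else 0) * x l + μ * (Smat m k l * (d l * x l)))]
    rw [Finset.sum_add_distrib, ← Finset.mul_sum]
    congr 1
    simp [Finset.sum_ite_eq]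
  have hAmv : ∀ (x : Fin m → ℝ) (k), (A.mulVec x) k
      = (P.mulVec x) k + μ / 2 * ∑ l, d l * x l := by
    intro x k
    rw [hmv, hmv]
    rw [Finset.sum_congr rfl (fun l _ => by rw [hA k l]; ring :
      ∀ l ∈ Finset.univ, A k l * x l = P k l * x l + μ / 2 * (d l * x l))]
    rw [Finset.sum_add_distrib, ← Finset.mul_sum]
  -- quadratic forms
  have hPform : ∀ x : Fin m → ℝ,
      ∑ k, (d k * x k) * (P.mulVec x) k = ∑ k, d k * x k ^ 2 := by
    intro x
    have hs := skew_form m (fun k => d k * x k)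
    calc ∑ k, (d k * x k) * (P.mulVec x) k
        = ∑ k, (d k * x k ^ 2
            + μ * ((d k * x k) * ∑ l, Smat m k l * (d l * x l))) := by
          refine Finset.sum_congr rfl fun k _ => ?_
          rw [hPmv]; ring
      _ = (∑ k, d k * x k ^ 2)
            + μ * ∑ k, (d k * x k) * ∑ l, Smat m k l * (d l * x l) := by
          rw [Finset.sum_add_distrib, ← Finset.mul_sum]
      _ = ∑ k, d k * x k ^ 2 := by rw [hs]; ring
  -- kernels trivial
  have hPker : ∀ x : Fin m → ℝ, P.mulVec x = 0 → x = 0 := by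
    intro x hx
    have h0 : ∑ k, d k * x k ^ 2 = 0 := by
      rw [← hPform x, hx]; simp
    have hxx := (Finset.sum_eq_zero_iff_of_nonneg (fun k _ => mul_nonneg (hd k).le (sq_nonneg _))).1 h0
    funext k
    have := hxx k (Finset.mem_univ k)
    have hk := hd k
    have : x k ^ 2 = 0 := by
      rcases mul_eq_zero.1 this with h | h
      · exact absurd h hk.ne'
      · exact h
    simpa using pow_eq_zero_iff (n := 2) (by norm_num) |>.1 this
  have hAker : ∀ x : Fin m → ℝ, A.mulVec x = 0 → x = 0 := by
    intro x hx
    have hform : ∑ k, (d k * x k) * (A.mulVec x) k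
        = (∑ k, d k * x k ^ 2) + μ / 2 * (∑ k, d k * x k) ^ 2 := by
      calc ∑ k, (d k * x k) * (A.mulVec x) k
          = ∑ k, ((d k * x k) * (P.mulVec x) k
              + μ / 2 * (∑ l, d l * x l) * (d k * x k)) := by
            refine Finset.sum_congr rfl fun k _ => ?_
            rw [hAmv]; ring
        _ = (∑ k, (d k * x k) * (P.mulVec x) k)
              + μ / 2 * (∑ l, d l * x l) * ∑ k, d k * x k := by
            rw [Finset.sum_add_distrib, ← Finset.mul_sum]
        _ = (∑ k, d k * x k ^ 2) + μ / 2 * (∑ k, d k * x k) ^ 2 := by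
            rw [hPform]; ring
    have h0 : (∑ k, d k * x k ^ 2) + μ / 2 * (∑ k, d k * x k) ^ 2 = 0 := by
      rw [← hform, hx]; simp
    have h1 : (0:ℝ) ≤ ∑ k, d k * x k ^ 2 :=
      Finset.sum_nonneg fun k _ => mul_nonneg (hd k).le (sq_nonneg _)
    have h2 : (0:ℝ) ≤ μ / 2 * (∑ k, d k * x k) ^ 2 :=
      mul_nonneg (by linarith) (sq_nonneg _)
    have h3 : ∑ k, d k * x k ^ 2 = 0 := by linarith
    have hxx := (Finset.sum_eq_zero_iff_of_nonneg (fun k _ => mul_nonneg (hd k).le (sq_nonneg _))).1 h3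
    funext k
    have := hxx k (Finset.mem_univ k)
    have hk := hd k
    have : x k ^ 2 = 0 := by
      rcases mul_eq_zero.1 this with h | h
      · exact absurd h hk.ne'
      · exact h
    simpa using pow_eq_zero_iff (n := 2) (by norm_num) |>.1 this
  have hPdet : P.det ≠ 0 := by
    intro h
    obtain ⟨v, hv0, hvne⟩ := (Matrix.exists_mulVec_eq_zero_iff).2 h
    exact hv0 (hPker v hvne)
  have hAdet : A.det ≠ 0 := by
    intro h
    obtain ⟨v, hv0, hvne⟩ := (Matrix.exists_mulVec_eq_zero_iff).2 h
    exact hv0 (hAker v hvne)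
  have hPunit : IsUnit P := (Matrix.isUnit_iff_isUnit_det P).2 (isUnit_iff_ne_zero.2 hPdet)
  have hAunit : IsUnit A := (Matrix.isUnit_iff_isUnit_det A).2 (isUnit_iff_ne_zero.2 hAdet)
  refine ⟨hPunit, hAunit, ?_⟩
  intro lam ξ hξ heig
  have hne : Nonempty (Fin m) := by
    by_contra h
    exact hξ (funext fun k => absurd ⟨k⟩ h)
  have hPPinv : P * P⁻¹ = 1 := Matrix.mul_nonsing_inv P (isUnit_iff_ne_zero.2 hPdet)
  have hPinvP : P⁻¹ * P = 1 := Matrix.nonsing_inv_mul P (isUnit_iff_ne_zero.2 hPdet)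
  have hcoe : (⇑Complex.ofRealHom : ℝ → ℂ) = Complex.ofReal := rfl
  set Pc : Matrix (Fin m) (Fin m) ℂ := P.map Complex.ofReal with hPc
  set Ac : Matrix (Fin m) (Fin m) ℂ := A.map Complex.ofReal with hAc'
  -- the eigen equation over ℂ: Ac ξ = lam • Pc ξ
  have hAc : Ac.mulVec ξ = lam • Pc.mulVec ξ := by
    have h1 := congrArg (fun v => Pc.mulVec v) heig
    simp only [Matrix.mulVec_mulVec, Matrix.mulVec_smul] at h1
    have h2 : Pc * (P⁻¹ * A).map Complex.ofReal = Ac := by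
      rw [hPc, hAc', ← hcoe, ← Matrix.map_mul, ← mul_assoc, hPPinv, one_mul]
    rw [h2] at h1
    exact h1
  set s : ℂ := ∑ l, (d l : ℂ) * ξ l with hs_def
  have hAP : Ac.mulVec ξ = Pc.mulVec ξ + ((μ : ℂ) / 2 * s) • (fun _ => (1:ℂ)) := by
    funext k
    have e1 : (Ac.mulVec ξ) k = ∑ l, ((A k l : ℝ) : ℂ) * ξ l := by
      simp [Ac, Matrix.mulVec, dotProduct, Matrix.map_apply]
    have e2 : (Pc.mulVec ξ) k = ∑ l, ((P k l : ℝ) : ℂ) * ξ l := by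
      simp [Pc, Matrix.mulVec, dotProduct, Matrix.map_apply]
    rw [Pi.add_apply, Pi.smul_apply, e1, e2, smul_eq_mul, mul_one, hs_def,
      Finset.mul_sum, ← Finset.sum_add_distrib]
    refine Finset.sum_congr rfl fun l _ => ?_
    rw [hA k l]
    push_cast
    ring
  have key : (lam - 1) • Pc.mulVec ξ = ((μ : ℂ) / 2 * s) • (fun _ => (1:ℂ)) := by
    rw [sub_smul, one_smul, ← hAc, hAP]
    abel
  -- injectivity of Pc.mulVec
  have hinj : Function.Injective Pc.mulVec := by
    intro x y hxy
    have hleft : (P⁻¹.map Complex.ofReal) * Pc = 1 := by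
      rw [hPc, ← hcoe, ← Matrix.map_mul, hPinvP]
      simp
    have := congrArg (fun v => (P⁻¹.map Complex.ofReal).mulVec v) hxy
    simpa [Matrix.mulVec_mulVec, hleft, Matrix.one_mulVec] using this
  have hPcξ : Pc.mulVec ξ ≠ 0 := by
    intro h
    exact hξ (hinj (h.trans (Matrix.mulVec_zero Pc).symm))
  -- the vector u = P⁻¹ e and α = dᵀ u
  set u : Fin m → ℝ := P⁻¹.mulVec (fun _ => 1) with hu_def
  have hu : P.mulVec u = fun _ => (1:ℝ) := by
    rw [hu_def, Matrix.mulVec_mulVec, hPPinv, Matrix.one_mulVec]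
  set α : ℝ := ∑ k, d k * u k with hα_def
  have hα_sq : α = ∑ k, d k * u k ^ 2 := by
    have h1 := hPform u
    rw [hu] at h1
    have h2 : α = ∑ k, d k * u k * (fun _ => (1:ℝ)) k := by
      rw [hα_def]
      exact Finset.sum_congr rfl fun k _ => by simp
    rw [h2, h1]
  have hα0 : 0 ≤ α := by
    rw [hα_sq]
    exact Finset.sum_nonneg fun k _ => mul_nonneg (hd k).le (sq_nonneg _)
  by_cases hs : s = 0
  · have h0 : (lam - 1) • Pc.mulVec ξ = 0 := by rw [key, hs]; simp
    have hl : lam = 1 := by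
      rcases smul_eq_zero.1 h0 with h | h
      · exact sub_eq_zero.1 h
      · exact absurd h hPcξ
    simp [hl]
  · have hl1 : lam - 1 ≠ 0 := by
      intro h
      apply hs
      rw [h, zero_smul] at key
      obtain ⟨k0⟩ := hne
      have := congrFun key k0
      simp only [Pi.zero_apply, Pi.smul_apply, smul_eq_mul, mul_one] at this
      rcases mul_eq_zero.1 this.symm with h' | h'
      · exact absurd h' (div_ne_zero (Complex.ofReal_ne_zero.2 hμ.ne') two_ne_zero)
      · exact h'
    set c : ℂ := ((μ : ℂ) / 2 * s) / (lam - 1) with hc_def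
    have hPcξ_eq : Pc.mulVec ξ = c • (fun _ => (1:ℂ)) := by
      have h2 : (lam - 1) • (c • (fun _ : Fin m => (1:ℂ))) = ((μ:ℂ)/2*s) • (fun _ : Fin m => (1:ℂ)) := by
        rw [smul_smul, hc_def]
        congr 1
        field_simp
      exact smul_right_injective (Fin m → ℂ) hl1 (key.trans h2.symm)
    have hucξ : Pc.mulVec (c • fun k => ((u k : ℝ) : ℂ)) = c • (fun _ => (1:ℂ)) := by
      rw [Matrix.mulVec_smul]
      congr 1
      funext k
      have := RingHom.map_mulVec Complex.ofRealHom P u k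
      rw [hu] at this
      simpa [hcoe, Function.comp_def, hPc] using this.symm
    have hξeq : ξ = c • fun k => ((u k : ℝ) : ℂ) := hinj (hPcξ_eq.trans hucξ.symm)
    have hsc : s = c * (α : ℂ) := by
      rw [hs_def, hξeq, hα_def]
      push_cast
      simp only [Pi.smul_apply, smul_eq_mul, Finset.mul_sum]
      exact Finset.sum_congr rfl fun l _ => by ring
    have hlam_eq : lam - 1 = (μ : ℂ) / 2 * (α : ℂ) := by
      have h1 : s * (lam - 1) = ((μ:ℂ)/2*s) * (α : ℂ) := by
        calc s * (lam - 1) = ((μ:ℂ)/2*s/(lam-1) * (α:ℂ)) * (lam - 1) := by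
              rw [← hc_def, ← hsc]
          _ = ((μ:ℂ)/2*s) * (α:ℂ) := by field_simp
      have h2 : (lam - 1) * s = ((μ:ℂ)/2*(α:ℂ)) * s := by linear_combination h1
      exact mul_right_cancel₀ hs h2
    have him : lam.im = 0 := by
      have := congrArg Complex.im hlam_eq
      simpa using this
    have hre : lam.re - 1 = μ / 2 * α := by
      have := congrArg Complex.re hlam_eq
      simpa using this
    exact ⟨him, by nlinarith⟩
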